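/- For a negative multinomial observation $X \sim \mathrm{NM}_m(r, p)$ with $r > 1$, the estimator $\hat{p}_i = X_i / (r + \sum_j X_j - 1)$ (defined as $0$ when $X_i = 0$) is unbiased for $p_i$: $E[X_i / (r + \sum_j X_j - 1)] = p_i$ for each $i = 1, \dots, m$. -/

import Mathlib

open scoped BigOperators

open MeasureTheory Set

/-- Integrability of `t ^ (a-1) * exp (-(b*t))` on `(0, ∞)`. -/
lemma integrableOn_aux {a b : ℝ} (ha : 0 < a) (hb : 0 < b) :
    MeasureTheory.IntegrableOn (fun t : ℝ => t ^ (a - 1) * Real.exp (-(b * t))) (Set.Ioi 0) := by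
  have h := integrableOn_rpow_mul_exp_neg_mul_rpow (by linarith : (-1:ℝ) < a - 1) one_pos hb
  refine h.congr_fun (fun x hx => ?_) measurableSet_Ioi
  simp only [Real.rpow_one, neg_mul]

lemma lintegral_aux {a b : ℝ} (ha : 0 < a) (hb : 0 < b) :
    ∫⁻ t in Set.Ioi (0:ℝ), ENNReal.ofReal (t ^ (a - 1) * Real.exp (-(b * t)))
      = ENNReal.ofReal ((1 / b) ^ a * Real.Gamma a) := by
  rw [← Real.integral_rpow_mul_exp_neg_mul_Ioi ha hb,
    MeasureTheory.ofReal_integral_eq_lintegral_ofReal (integrableOn_aux ha hb)]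
  exact (MeasureTheory.ae_restrict_mem measurableSet_Ioi).mono fun t ht => by
    have : (0:ℝ) < t := ht
    positivity

/-- The generalized (negative) binomial series. -/
lemma hasSum_negBinomial {r q : ℝ} (hr : 0 < r) (hq0 : 0 ≤ q) (hq1 : q < 1) :
    HasSum (fun n : ℕ => Real.Gamma (r + n) / (Real.Gamma r * (Nat.factorial n : ℝ)) * q ^ n)
      ((1 - q) ^ (-r)) := by
  have hGam : (0:ℝ) < Real.Gamma r := Real.Gamma_pos_of_pos hr
  have h1q : (0:ℝ) < 1 - q := by linarith
  set a : ℕ → ℝ := fun n => Real.Gamma (r + n) / (Real.Gamma r * (Nat.factorial n : ℝ)) * q ^ n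
    with ha
  have ha_nn : ∀ n, 0 ≤ a n := fun n => by
    have h1 : (0:ℝ) < Real.Gamma (r + n) := Real.Gamma_pos_of_pos (by positivity)
    have h2 : (0:ℝ) < (Nat.factorial n : ℝ) := by exact_mod_cast n.factorial_pos
    rw [ha]; positivity
  set F : ℕ → ℝ → ENNReal := fun n t =>
    ENNReal.ofReal (q ^ n / (Real.Gamma r * (Nat.factorial n : ℝ)) *
      (t ^ (r + (n:ℝ) - 1) * Real.exp (-(1 * t)))) with hF
  have hfac : ∀ n : ℕ, (0:ℝ) < (Nat.factorial n : ℝ) := fun n => by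
    exact_mod_cast n.factorial_pos
  have key1 : ∀ n, ∫⁻ t in Set.Ioi (0:ℝ), F n t = ENNReal.ofReal (a n) := by
    intro n
    have hc : 0 ≤ q ^ n / (Real.Gamma r * (Nat.factorial n : ℝ)) := by
      have := hfac n; positivity
    simp only [hF]
    simp_rw [ENNReal.ofReal_mul hc]
    rw [MeasureTheory.lintegral_const_mul' _ _ ENNReal.ofReal_ne_top,
      lintegral_aux (by positivity : (0:ℝ) < r + n) one_pos,
      ← ENNReal.ofReal_mul hc]
    congr 1
    rw [ha]
    have := hfac n
    field_simp
    simp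
  have hmeas : ∀ n, AEMeasurable (F n) (volume.restrict (Set.Ioi (0:ℝ))) := by
    intro n
    apply Measurable.aemeasurable
    apply Measurable.ennreal_ofReal
    fun_prop
  have key2 : ∀ t ∈ Set.Ioi (0:ℝ), ∑' n, F n t
      = ENNReal.ofReal (t ^ (r - 1) * Real.exp (-((1 - q) * t)) / Real.Gamma r) := by
    intro t ht
    have ht0 : (0:ℝ) < t := ht
    have hrw : ∀ n : ℕ, q ^ n / (Real.Gamma r * (Nat.factorial n : ℝ)) *
        (t ^ (r + (n:ℝ) - 1) * Real.exp (-(1 * t)))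
        = (t ^ (r - 1) * Real.exp (-t) / Real.Gamma r) * ((q * t) ^ n / (Nat.factorial n : ℝ)) := by
      intro n
      have hfn := hfac n
      rw [show r + (n:ℝ) - 1 = (r - 1) + (n:ℝ) by ring, Real.rpow_add ht0,
        Real.rpow_natCast, mul_pow]
      field_simp
    have hsum : Summable (fun n : ℕ => (t ^ (r - 1) * Real.exp (-t) / Real.Gamma r) *
        ((q * t) ^ n / (Nat.factorial n : ℝ))) :=
      (Real.summable_pow_div_factorial (q * t)).mul_left _
    have hnn : ∀ n : ℕ, 0 ≤ (t ^ (r - 1) * Real.exp (-t) / Real.Gamma r) *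
        ((q * t) ^ n / (Nat.factorial n : ℝ)) := fun n => by
      have hfn := hfac n
      have hqt : 0 ≤ q * t := by positivity
      positivity
    simp only [hF]
    simp_rw [hrw]
    rw [← ENNReal.ofReal_tsum_of_nonneg hnn hsum]
    congr 1
    rw [tsum_mul_left]
    have hexp : ∑' n : ℕ, (q * t) ^ n / (Nat.factorial n : ℝ) = Real.exp (q * t) := by
      rw [Real.exp_eq_exp_ℝ, NormedSpace.exp_eq_tsum_div]
    rw [hexp]
    have hE : Real.exp (-t) * Real.exp (q * t) = Real.exp (-((1 - q) * t)) := by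
      rw [← Real.exp_add]; ring_nf
    calc t ^ (r - 1) * Real.exp (-t) / Real.Gamma r * Real.exp (q * t)
        = t ^ (r - 1) * (Real.exp (-t) * Real.exp (q * t)) / Real.Gamma r := by ring
      _ = t ^ (r - 1) * Real.exp (-((1 - q) * t)) / Real.Gamma r := by rw [hE]
  have key3 : ∫⁻ t in Set.Ioi (0:ℝ),
      ENNReal.ofReal (t ^ (r - 1) * Real.exp (-((1 - q) * t)) / Real.Gamma r)
      = ENNReal.ofReal ((1 - q) ^ (-r)) := by
    have hc : (0:ℝ) ≤ (Real.Gamma r)⁻¹ := by positivity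
    have : ∀ t : ℝ, t ^ (r - 1) * Real.exp (-((1 - q) * t)) / Real.Gamma r
        = (Real.Gamma r)⁻¹ * (t ^ (r - 1) * Real.exp (-((1 - q) * t))) := fun t => by
      field_simp
    simp_rw [this, ENNReal.ofReal_mul hc]
    rw [MeasureTheory.lintegral_const_mul' _ _ ENNReal.ofReal_ne_top,
      lintegral_aux hr h1q, ← ENNReal.ofReal_mul hc]
    congr 1
    rw [one_div, Real.inv_rpow h1q.le, Real.rpow_neg h1q.le]
    field_simp
  have main : ∑' n, ENNReal.ofReal (a n) = ENNReal.ofReal ((1 - q) ^ (-r)) := by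
    calc ∑' n, ENNReal.ofReal (a n) = ∑' n, ∫⁻ t in Set.Ioi (0:ℝ), F n t :=
          tsum_congr fun n => (key1 n).symm
      _ = ∫⁻ t in Set.Ioi (0:ℝ), ∑' n, F n t := (MeasureTheory.lintegral_tsum hmeas).symm
      _ = ∫⁻ t in Set.Ioi (0:ℝ),
            ENNReal.ofReal (t ^ (r - 1) * Real.exp (-((1 - q) * t)) / Real.Gamma r) :=
          setLIntegral_congr_fun measurableSet_Ioi key2
      _ = ENNReal.ofReal ((1 - q) ^ (-r)) := key3
  have hne : ∑' n, ENNReal.ofReal (a n) ≠ ⊤ := by rw [main]; exact ENNReal.ofReal_ne_top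
  have hsummable : Summable a := by
    have h := ENNReal.summable_toReal hne
    exact (summable_congr fun n => ENNReal.toReal_ofReal (ha_nn n)).mp h
  have htsum : ∑' n, a n = (1 - q) ^ (-r) := by
    calc ∑' n, a n = ∑' n, (ENNReal.ofReal (a n)).toReal :=
          tsum_congr fun n => (ENNReal.toReal_ofReal (ha_nn n)).symm
      _ = (∑' n, ENNReal.ofReal (a n)).toReal :=
          (ENNReal.tsum_toReal_eq fun n => ENNReal.ofReal_ne_top).symm
      _ = (1 - q) ^ (-r) := by
          rw [main, ENNReal.toReal_ofReal (Real.rpow_nonneg h1q.le _)]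
  exact htsum ▸ hsummable.hasSum

/-- Normalization of the negative multinomial weights. -/
lemma hasSum_NM {m : ℕ} {r : ℝ} (hr : 0 < r) {p : Fin m → ℝ}
    (hp : ∀ j, 0 ≤ p j) (hps : ∑ j, p j < 1) :
    HasSum (fun x : Fin m → ℕ =>
        Real.Gamma (r + ∑ j, (x j : ℝ)) / (Real.Gamma r * ∏ j, (Nat.factorial (x j) : ℝ)) *
          ∏ j, p j ^ (x j)) ((1 - ∑ j, p j) ^ (-r)) := by
  classical
  have hGam : (0:ℝ) < Real.Gamma r := Real.Gamma_pos_of_pos hr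
  have hq0 : 0 ≤ ∑ j, p j := Finset.sum_nonneg fun j _ => hp j
  set f : (Fin m → ℕ) → ℝ := fun x =>
    Real.Gamma (r + ∑ j, (x j : ℝ)) / (Real.Gamma r * ∏ j, (Nat.factorial (x j) : ℝ)) *
      ∏ j, p j ^ (x j) with hf
  have hf_nn : ∀ x, 0 ≤ f x := by
    intro x
    have h1 : (0:ℝ) < Real.Gamma (r + ∑ j, (x j : ℝ)) :=
      Real.Gamma_pos_of_pos (by positivity)
    have h2 : (0:ℝ) < ∏ j, (Nat.factorial (x j) : ℝ) :=
      Finset.prod_pos fun j _ => by exact_mod_cast (x j).factorial_pos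
    have h3 : (0:ℝ) ≤ ∏ j, p j ^ (x j) := Finset.prod_nonneg fun j _ => pow_nonneg (hp j) _
    rw [hf]; positivity
  set g : ℕ → ℝ := fun n =>
    Real.Gamma (r + n) / (Real.Gamma r * (Nat.factorial n : ℝ)) * (∑ j, p j) ^ n with hg
  have hgsum : HasSum g ((1 - ∑ j, p j) ^ (-r)) := hasSum_negBinomial hr hq0 hps
  -- finite fibers
  have hfib : ∀ n : ℕ, ∑ x ∈ Finset.piAntidiag (Finset.univ : Finset (Fin m)) n, f x = g n := by
    intro n
    have hstep : ∀ x ∈ Finset.piAntidiag (Finset.univ : Finset (Fin m)) n,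
        f x = Real.Gamma (r + n) / (Real.Gamma r * (Nat.factorial n : ℝ)) *
          ((Nat.multinomial Finset.univ x : ℝ) * ∏ j, p j ^ (x j)) := by
      intro x hx
      obtain ⟨hsum, -⟩ := Finset.mem_piAntidiag.mp hx
      have hsumR : ∑ j, (x j : ℝ) = (n : ℝ) := by
        rw [← hsum]; push_cast; rfl
      have hspec : (∏ j, (Nat.factorial (x j) : ℝ)) * (Nat.multinomial Finset.univ x : ℝ)
          = (Nat.factorial n : ℝ) := by
        rw [← hsum]
        exact_mod_cast congrArg (Nat.cast (R := ℝ)) (Nat.multinomial_spec Finset.univ x)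
      have h2 : (0:ℝ) < ∏ j, (Nat.factorial (x j) : ℝ) :=
        Finset.prod_pos fun j _ => by exact_mod_cast (x j).factorial_pos
      have hfacn : (0:ℝ) < (Nat.factorial n : ℝ) := by exact_mod_cast n.factorial_pos
      simp only [hf]
      rw [hsumR, ← hspec]
      have hmult : (0:ℝ) < (Nat.multinomial Finset.univ x : ℝ) := by
        exact_mod_cast Nat.multinomial_pos _ _
      field_simp
    rw [Finset.sum_congr rfl hstep, ← Finset.mul_sum, hg]
    congr 1
    rw [Finset.sum_pow_eq_sum_piAntidiag]
  -- package into a sigma type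
  let e : (Σ n : ℕ, {x : Fin m → ℕ // x ∈ Finset.piAntidiag (Finset.univ : Finset (Fin m)) n})
      ≃ (Fin m → ℕ) :=
    { toFun := fun s => s.2.1
      invFun := fun x => ⟨∑ j, x j, ⟨x, by simp [Finset.mem_piAntidiag]⟩⟩
      left_inv := by
        rintro ⟨n, x, hx⟩
        obtain ⟨h1, -⟩ := Finset.mem_piAntidiag.mp hx
        subst h1
        rfl
      right_inv := fun x => rfl }
  have hfibS : ∀ n, HasSum
      (fun y : {x : Fin m → ℕ // x ∈ Finset.piAntidiag (Finset.univ : Finset (Fin m)) n} =>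
        f y.1) (g n) := by
    intro n
    have h := hasSum_fintype
      (fun y : {x : Fin m → ℕ // x ∈ Finset.piAntidiag (Finset.univ : Finset (Fin m)) n} => f y.1)
    rwa [Finset.sum_coe_sort _ f, hfib n] at h
  have hsig : Summable (fun s : (Σ n : ℕ,
      {x : Fin m → ℕ // x ∈ Finset.piAntidiag (Finset.univ : Finset (Fin m)) n}) => f (e s)) := by
    rw [summable_sigma_of_nonneg (fun s => hf_nn _)]
    refine ⟨fun n => (hfibS n).summable, ?_⟩
    exact hgsum.summable.congr fun n => ((hfibS n).tsum_eq).symm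
  have hcomp : HasSum (f ∘ e) ((1 - ∑ j, p j) ^ (-r)) :=
    HasSum.sigma_of_hasSum hgsum hfibS hsig
  exact e.hasSum_iff.mp hcomp

/-- The estimator `X i / (r + ∑ X - 1)` is unbiased for `p i`. -/
theorem umvu_unbiased (m : ℕ) (r : ℝ) (hr : 1 < r)
    (p : Fin m → ℝ) (hp : ∀ j, 0 < p j) (hps : ∑ j, p j < 1) (i : Fin m) :
    ∑' x : Fin m → ℕ,
        (Real.Gamma (r + ∑ j, (x j : ℝ)) / (Real.Gamma r * ∏ j, (Nat.factorial (x j) : ℝ)) *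
          (1 - ∑ j, p j) ^ r * ∏ j, p j ^ (x j)) *
            ((x i : ℝ) / (r + (∑ j, (x j : ℝ)) - 1)) = p i := by
  classical
  have hr0 : (0:ℝ) < r := by linarith
  have hGam : (0:ℝ) < Real.Gamma r := Real.Gamma_pos_of_pos hr0
  have h1q : (0:ℝ) < 1 - ∑ j, p j := by linarith
  set f : (Fin m → ℕ) → ℝ := fun x =>
    (Real.Gamma (r + ∑ j, (x j : ℝ)) / (Real.Gamma r * ∏ j, (Nat.factorial (x j) : ℝ)) *
      (1 - ∑ j, p j) ^ r * ∏ j, p j ^ (x j)) *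
        ((x i : ℝ) / (r + (∑ j, (x j : ℝ)) - 1)) with hfdef
  set g : (Fin m → ℕ) → (Fin m → ℕ) := fun y => Function.update y i (y i + 1) with hgdef
  have hginj : Function.Injective g := by
    intro y z h
    funext j
    have hj := congrFun h j
    by_cases hji : j = i
    · subst hji
      simpa [hgdef, Function.update_self] using hj
    · simpa [hgdef, Function.update_of_ne hji] using hj
  have hzero : ∀ x ∉ Set.range g, f x = 0 := by
    intro x hx
    have hxi : x i = 0 := by
      by_contra h
      refine hx ⟨Function.update x i (x i - 1), ?_⟩
      funext j
      by_cases hji : j = i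
      · subst hji
        simp [hgdef, Function.update_self, Nat.sub_add_cancel (Nat.pos_of_ne_zero h)]
      · simp [hgdef, Function.update_of_ne hji]
    simp [hfdef, hxi]
  have hNM := hasSum_NM (m := m) hr0 (fun j => (hp j).le) hps
  have hconst : (p i * (1 - ∑ j, p j) ^ r) * (1 - ∑ j, p j) ^ (-r) = p i := by
    rw [mul_assoc, ← Real.rpow_add h1q]
    simp
  have hid : ∀ y : Fin m → ℕ, f (g y) = (p i * (1 - ∑ j, p j) ^ r) *
      (Real.Gamma (r + ∑ j, (y j : ℝ)) / (Real.Gamma r * ∏ j, (Nat.factorial (y j) : ℝ)) *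
        ∏ j, p j ^ (y j)) := by
    intro y
    have hfun : ∀ {α : Type} (F : (j : Fin m) → ℕ → α),
        (fun j => F j (Function.update y i (y i + 1) j))
          = Function.update (fun j => F j (y j)) i (F i (y i + 1)) := by
      intro α F
      funext j
      rcases eq_or_ne j i with rfl | hj
      · simp
      · simp [Function.update_of_ne hj]
    have A1 : ∑ j, ((Function.update y i (y i + 1) j : ℕ) : ℝ) = (∑ j, (y j : ℝ)) + 1 := by
      rw [show (fun j => ((Function.update y i (y i + 1) j : ℕ) : ℝ))
            = Function.update (fun j => ((y j : ℕ) : ℝ)) i (((y i + 1 : ℕ) : ℝ)) from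
          hfun (fun _ n => ((n : ℕ) : ℝ)),
        Finset.sum_update_of_mem (Finset.mem_univ i),
        Finset.sum_eq_sum_sdiff_singleton_add (Finset.mem_univ i) (fun j => ((y j : ℕ) : ℝ))]
      push_cast
      ring
    have A2 : ∏ j, ((Nat.factorial (Function.update y i (y i + 1) j) : ℝ))
        = ((y i : ℝ) + 1) * ∏ j, (Nat.factorial (y j) : ℝ) := by
      rw [show (fun j => ((Nat.factorial (Function.update y i (y i + 1) j) : ℕ) : ℝ))
            = Function.update (fun j => ((Nat.factorial (y j) : ℕ) : ℝ)) i
              ((Nat.factorial (y i + 1) : ℝ)) from hfun (fun _ n => ((Nat.factorial n : ℕ) : ℝ)),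
        Finset.prod_update_of_mem (Finset.mem_univ i),
        Finset.prod_eq_prod_diff_singleton_mul (Finset.mem_univ i)
          (fun j => (Nat.factorial (y j) : ℝ))]
      push_cast [Nat.factorial_succ]
      ring
    have A3 : ∏ j, p j ^ (Function.update y i (y i + 1) j) = p i * ∏ j, p j ^ (y j) := by
      rw [show (fun j => p j ^ (Function.update y i (y i + 1) j))
            = Function.update (fun j => p j ^ (y j)) i (p i ^ (y i + 1)) from
          hfun (fun j n => p j ^ n),
        Finset.prod_update_of_mem (Finset.mem_univ i),
        Finset.prod_eq_prod_diff_singleton_mul (Finset.mem_univ i) (fun j => p j ^ (y j)),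
        pow_succ]
      ring
    have A4 : ((Function.update y i (y i + 1) i : ℕ) : ℝ) = (y i : ℝ) + 1 := by
      rw [Function.update_self]; push_cast; ring
    have hs_nn : (0:ℝ) ≤ ∑ j, (y j : ℝ) := Finset.sum_nonneg fun j _ => by positivity
    have hrs : (0:ℝ) < r + ∑ j, (y j : ℝ) := by linarith
    have hGadd : Real.Gamma (r + ((∑ j, (y j : ℝ)) + 1))
        = (r + ∑ j, (y j : ℝ)) * Real.Gamma (r + ∑ j, (y j : ℝ)) := by
      rw [show r + ((∑ j, (y j : ℝ)) + 1) = (r + ∑ j, (y j : ℝ)) + 1 by ring,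
        Real.Gamma_add_one (ne_of_gt hrs)]
    have hprod_pos : (0:ℝ) < ∏ j, (Nat.factorial (y j) : ℝ) :=
      Finset.prod_pos fun j _ => by exact_mod_cast (y j).factorial_pos
    have hyi1 : (0:ℝ) < (y i : ℝ) + 1 := by positivity
    simp only [hfdef, hgdef, A1, A2, A3, A4, hGadd]
    rw [show r + ((∑ j, (y j : ℝ)) + 1) - 1 = r + ∑ j, (y j : ℝ) by ring]
    field_simp
  have hcomp : HasSum (f ∘ g) (p i) := by
    have h := hNM.mul_left (p i * (1 - ∑ j, p j) ^ r)
    rw [hconst] at h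
    have : (f ∘ g) = fun y =>
        (p i * (1 - ∑ j, p j) ^ r) *
          (Real.Gamma (r + ∑ j, (y j : ℝ)) / (Real.Gamma r * ∏ j, (Nat.factorial (y j) : ℝ)) *
            ∏ j, p j ^ (y j)) := funext hid
    rw [this]
    exact h
  exact ((hginj.hasSum_iff hzero).mp hcomp).tsum_eq
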